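/- For any finite DAG G with no isolated nodes and any fast-memory capacity r ≥ Δ_in + 1 (where Δ_in is the maximum in-degree of G), the optimal I/O cost in the partial-computing red-blue pebble game is at most the optimal I/O cost in the standard red-blue pebble game: OPT_PRBP(G, r) ≤ OPT_RBP(G, r). In particular, every valid RBP pebbling of cost C induces a valid PRBP pebbling of cost at most C. -/

import Mathlib

open scoped Classical

/-! ### Directed graphs / DAGs -/

structure DirGraph (V : Type) where
  E : V → V → Prop

namespace DirGraph

variable {V : Type}

def Acyclic (G : DirGraph V) : Prop := ∀ v, ¬ Relation.TransGen G.E v v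

def IsSource (G : DirGraph V) (v : V) : Prop := ∀ u, ¬ G.E u v

def IsSink (G : DirGraph V) (v : V) : Prop := ∀ u, ¬ G.E v u

def NoIsolated (G : DirGraph V) : Prop := ∀ v, (∃ u, G.E u v) ∨ (∃ u, G.E v u)

noncomputable def inDeg (G : DirGraph V) (v : V) : ℕ := {u | G.E u v}.ncard

noncomputable def outDeg (G : DirGraph V) (v : V) : ℕ := {u | G.E v u}.ncard

noncomputable def maxInDeg (G : DirGraph V) [Fintype V] : ℕ :=
  Finset.univ.sup G.inDeg

noncomputable def maxOutDeg (G : DirGraph V) [Fintype V] : ℕ :=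
  Finset.univ.sup G.outDeg

end DirGraph

/-! ### The (one-shot) red-blue pebble game (RBP) -/

structure RBPState (V : Type) where
  red : Finset V
  blue : Finset V
  computed : Finset V

inductive RBPMove (V : Type) where
  | save : V → RBPMove V
  | load : V → RBPMove V
  | compute : V → RBPMove V
  | delete : V → RBPMove V

def RBPMove.ioCost {V : Type} : RBPMove V → ℕ
  | .save _ => 1
  | .load _ => 1
  | _ => 0

variable {V : Type} [Fintype V] [DecidableEq V]

def RBPStep (G : DirGraph V) (r : ℕ) (s : RBPState V) :
    RBPMove V → RBPState V → Prop
  | .save v, t => v ∈ s.red ∧ t = { s with blue := insert v s.blue }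
  | .load v, t => v ∈ s.blue ∧ (insert v s.red).card ≤ r ∧
      t = { s with red := insert v s.red }
  | .compute v, t => ¬ G.IsSource v ∧ v ∉ s.computed ∧
      (∀ u, G.E u v → u ∈ s.red) ∧ (insert v s.red).card ≤ r ∧
      t = { s with red := insert v s.red, computed := insert v s.computed }
  | .delete v, t => v ∈ s.red ∧ t = { s with red := s.red.erase v }

inductive RBPReaches (G : DirGraph V) (r : ℕ) :
    RBPState V → List (RBPMove V) → RBPState V → Prop
  | nil (s : RBPState V) : RBPReaches G r s [] s
  | cons {s t u : RBPState V} {m : RBPMove V} {L : List (RBPMove V)} :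
      RBPStep G r s m t → RBPReaches G r t L u → RBPReaches G r s (m :: L) u

noncomputable def RBPInit (G : DirGraph V) : RBPState V :=
  ⟨∅, Finset.univ.filter (fun v => G.IsSource v), ∅⟩

def RBPValid (G : DirGraph V) (r : ℕ) (L : List (RBPMove V)) : Prop :=
  ∃ t, RBPReaches G r (RBPInit G) L t ∧ ∀ v, G.IsSink v → v ∈ t.blue

def RBPCost {V : Type} (L : List (RBPMove V)) : ℕ := (L.map RBPMove.ioCost).sum

noncomputable def optRBP (G : DirGraph V) (r : ℕ) : ℕ∞ :=
  sInf ((fun L => (RBPCost L : ℕ∞)) '' {L | RBPValid G r L})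

/-! ### The partial-computing red-blue pebble game (PRBP) -/

structure PRBPState (V : Type) where
  lred : Finset V
  dred : Finset V
  blue : Finset V
  marked : Finset (V × V)

def PRBPState.red (s : PRBPState V) : Finset V := s.lred ∪ s.dred

inductive PRBPMove (V : Type) where
  | save : V → PRBPMove V
  | load : V → PRBPMove V
  | pcompute : V → V → PRBPMove V
  | delete : V → PRBPMove V

def PRBPMove.ioCost {V : Type} : PRBPMove V → ℕ
  | .save _ => 1
  | .load _ => 1
  | _ => 0

def PRBPStep (G : DirGraph V) (r : ℕ) (s : PRBPState V) :
    PRBPMove V → PRBPState V → Prop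
  | .save v, t => v ∈ s.dred ∧
      t = { s with lred := insert v s.lred, dred := s.dred.erase v,
                   blue := insert v s.blue }
  | .load v, t => v ∈ s.blue ∧ ((insert v s.lred) ∪ s.dred).card ≤ r ∧
      t = { s with lred := insert v s.lred }
  | .pcompute u v, t => G.E u v ∧ (u, v) ∉ s.marked ∧
      (∀ w, G.E w u → (w, u) ∈ s.marked) ∧ u ∈ s.red ∧
      (v ∈ s.red ∨ (v ∉ s.red ∧ v ∉ s.blue)) ∧
      ((s.lred.erase v) ∪ (insert v s.dred)).card ≤ r ∧
      t = { s with lred := s.lred.erase v, dred := insert v s.dred,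
                   blue := s.blue.erase v, marked := insert (u, v) s.marked }
  | .delete v, t =>
      (v ∈ s.lred ∧ t = { s with lred := s.lred.erase v }) ∨
      (v ∈ s.dred ∧ (∀ w, G.E v w → (v, w) ∈ s.marked) ∧
        t = { s with dred := s.dred.erase v })

inductive PRBPReaches (G : DirGraph V) (r : ℕ) :
    PRBPState V → List (PRBPMove V) → PRBPState V → Prop
  | nil (s : PRBPState V) : PRBPReaches G r s [] s
  | cons {s t u : PRBPState V} {m : PRBPMove V} {L : List (PRBPMove V)} :
      PRBPStep G r s m t → PRBPReaches G r t L u → PRBPReaches G r s (m :: L) u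

noncomputable def PRBPInit (G : DirGraph V) : PRBPState V :=
  ⟨∅, ∅, Finset.univ.filter (fun v => G.IsSource v), ∅⟩

def PRBPValid (G : DirGraph V) (r : ℕ) (L : List (PRBPMove V)) : Prop :=
  ∃ t, PRBPReaches G r (PRBPInit G) L t ∧ (∀ v, G.IsSink v → v ∈ t.blue) ∧
    ∀ u v, G.E u v → (u, v) ∈ t.marked

def PRBPCost {V : Type} (L : List (PRBPMove V)) : ℕ := (L.map PRBPMove.ioCost).sum

noncomputable def optPRBP (G : DirGraph V) (r : ℕ) : ℕ∞ :=
  sInf ((fun L => (PRBPCost L : ℕ∞)) '' {L | PRBPValid G r L})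

/-- `s` is a state reached by some prefix of the pebbling `L`. -/
def PRBPPrefixState (G : DirGraph V) (r : ℕ) (L : List (PRBPMove V))
    (s : PRBPState V) : Prop :=
  ∃ L₁ L₂, L = L₁ ++ L₂ ∧ PRBPReaches G r (PRBPInit G) L₁ s

/-! ### Paths, dominators, S-partitions -/

/-- A directed path in `G` starting at a source node. -/
def IsSourcePath (G : DirGraph V) (p : List V) : Prop :=
  p ≠ [] ∧ p.Chain' G.E ∧ ∀ h : p ≠ [], G.IsSource (p.head h)

/-- `D` is a dominator for the node set `V₀`. -/
def Dominates (G : DirGraph V) (D : Set V) (V₀ : Set V) : Prop :=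
  ∀ p : List V, IsSourcePath G p → ∀ h : p ≠ [], p.getLast h ∈ V₀ →
    ∃ d ∈ D, d ∈ p

/-- The path `p` contains an edge of `E₀` (two consecutive nodes forming it). -/
def PathContainsEdge (p : List V) (E₀ : Set (V × V)) : Prop :=
  ∃ u v, (u, v) ∈ E₀ ∧ [u, v] <:+: p

/-- `D` is an edge-dominator for the edge set `E₀`. -/
def EdgeDominates (G : DirGraph V) (D : Set V) (E₀ : Set (V × V)) : Prop :=
  ∀ p : List V, IsSourcePath G p → PathContainsEdge p E₀ → ∃ d ∈ D, d ∈ p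

/-- The terminal set of a node set `V₀`: nodes of `V₀` with no out-neighbor in `V₀`. -/
def terminalSet (G : DirGraph V) (V₀ : Set V) : Set V :=
  {v | v ∈ V₀ ∧ ∀ w, G.E v w → w ∉ V₀}

/-- The edge-terminal set of an edge set `E₀`. -/
def edgeTerminalSet (E₀ : Set (V × V)) : Set V :=
  {v | (∃ u, (u, v) ∈ E₀) ∧ ∀ w, (v, w) ∉ E₀}

/-- An `S`-partition of the DAG `G` (Hong–Kung). -/
def IsSPartition (G : DirGraph V) (S : ℕ) (k : ℕ) (P : Fin k → Set V) : Prop :=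
  (∀ v : V, ∃! i, v ∈ P i) ∧
  (∀ i j : Fin k, j < i → ∀ u v, u ∈ P i → v ∈ P j → ¬ G.E u v) ∧
  (∀ i, ∃ D : Set V, D.ncard ≤ S ∧ Dominates G D (P i)) ∧
  (∀ i, (terminalSet G (P i)).ncard ≤ S)

/-- An `S`-dominator partition of the DAG `G`: an `S`-partition without the
terminal-set condition. -/
def IsSDomPartition (G : DirGraph V) (S : ℕ) (k : ℕ) (P : Fin k → Set V) : Prop :=
  (∀ v : V, ∃! i, v ∈ P i) ∧
  (∀ i j : Fin k, j < i → ∀ u v, u ∈ P i → v ∈ P j → ¬ G.E u v) ∧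
  (∀ i, ∃ D : Set V, D.ncard ≤ S ∧ Dominates G D (P i))

/-- An `S`-edge partition of the DAG `G`. -/
def IsSEdgePartition (G : DirGraph V) (S : ℕ) (k : ℕ)
    (P : Fin k → Set (V × V)) : Prop :=
  (∀ i, P i ⊆ {e | G.E e.1 e.2}) ∧
  (∀ u v, G.E u v → ∃! i, (u, v) ∈ P i) ∧
  (∀ i j : Fin k, i < j → ∀ u v w, G.E u v → G.E v w →
      ¬ ((v, w) ∈ P i ∧ (u, v) ∈ P j)) ∧
  (∀ i, ∃ D : Set V, D.ncard ≤ S ∧ EdgeDominates G D (P i)) ∧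
  (∀ i, (edgeTerminalSet (P i)).ncard ≤ S)

noncomputable def minEdgePartition (G : DirGraph V) (S : ℕ) : ℕ :=
  sInf {k | ∃ P : Fin k → Set (V × V), IsSEdgePartition G S k P}

noncomputable def minDomPartition (G : DirGraph V) (S : ℕ) : ℕ :=
  sInf {k | ∃ P : Fin k → Set V, IsSDomPartition G S k P}

noncomputable def minSPartition (G : DirGraph V) (S : ℕ) : ℕ :=
  sInf {k | ∃ P : Fin k → Set V, IsSPartition G S k P}
/-! ### Auxiliary lemmas for the simulation proof -/

set_option linter.unusedSectionVars false

section SimProof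

variable {V : Type} [Fintype V] [DecidableEq V] (G : DirGraph V) (r : ℕ)

lemma RBPCost_cons' (m : RBPMove V) (L : List (RBPMove V)) :
    RBPCost (m :: L) = m.ioCost + RBPCost L := rfl

lemma PRBPCost_cons' (m : PRBPMove V) (L : List (PRBPMove V)) :
    PRBPCost (m :: L) = m.ioCost + PRBPCost L := rfl

lemma PRBPCost_append' (L1 L2 : List (PRBPMove V)) :
    PRBPCost (L1 ++ L2) = PRBPCost L1 + PRBPCost L2 := by
  simp [PRBPCost]

lemma PRBPReaches_append' {s t w : PRBPState V} {L1 L2 : List (PRBPMove V)}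
    (h1 : PRBPReaches G r s L1 t) :
    PRBPReaches G r t L2 w → PRBPReaches G r s (L1 ++ L2) w := by
  induction h1 with
  | nil s => exact fun h => h
  | cons hs _ ih => exact fun h2 => .cons hs (ih h2)

lemma rbp_step_computed_mono {s t : RBPState V} {m : RBPMove V}
    (h : RBPStep G r s m t) : s.computed ⊆ t.computed := by
  cases m with
  | save v => obtain ⟨_, rfl⟩ := h; exact fun _ h => h
  | load v => obtain ⟨_, _, rfl⟩ := h; exact fun _ h => h
  | compute v => obtain ⟨_, _, _, _, rfl⟩ := h; exact Finset.subset_insert _ _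
  | delete v => obtain ⟨_, rfl⟩ := h; exact fun _ h => h

lemma rbp_computed_mono {s t : RBPState V} {L : List (RBPMove V)}
    (h : RBPReaches G r s L t) : s.computed ⊆ t.computed := by
  induction h with
  | nil s => exact fun _ h => h
  | cons hstep _ ih => exact subset_trans (rbp_step_computed_mono G r hstep) ih

/-- Preservation of the invariant: every non-source node holding a pebble is computed. -/
lemma rbp_step_inv6 {s t : RBPState V} {m : RBPMove V} (h : RBPStep G r s m t)
    (h6 : ∀ v, ¬G.IsSource v → v ∈ s.red ∪ s.blue → v ∈ s.computed) :
    ∀ v, ¬G.IsSource v → v ∈ t.red ∪ t.blue → v ∈ t.computed := by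
  cases m with
  | save x =>
    obtain ⟨hx, rfl⟩ := h
    intro v hv hmem
    rcases Finset.mem_union.mp hmem with h' | h'
    · exact h6 v hv (Finset.mem_union_left _ h')
    · rcases Finset.mem_insert.mp h' with rfl | h'
      · exact h6 v hv (Finset.mem_union_left _ hx)
      · exact h6 v hv (Finset.mem_union_right _ h')
  | load x =>
    obtain ⟨hx, _, rfl⟩ := h
    intro v hv hmem
    rcases Finset.mem_union.mp hmem with h' | h'
    · rcases Finset.mem_insert.mp h' with rfl | h'
      · exact h6 v hv (Finset.mem_union_right _ hx)
      · exact h6 v hv (Finset.mem_union_left _ h')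
    · exact h6 v hv (Finset.mem_union_right _ h')
  | compute x =>
    obtain ⟨_, _, _, _, rfl⟩ := h
    intro v hv hmem
    rcases Finset.mem_union.mp hmem with h' | h'
    · rcases Finset.mem_insert.mp h' with rfl | h'
      · exact Finset.mem_insert_self _ _
      · exact Finset.mem_insert_of_mem (h6 v hv (Finset.mem_union_left _ h'))
    · exact Finset.mem_insert_of_mem (h6 v hv (Finset.mem_union_right _ h'))
  | delete x =>
    obtain ⟨hx, rfl⟩ := h
    intro v hv hmem
    rcases Finset.mem_union.mp hmem with h' | h'
    · exact h6 v hv (Finset.mem_union_left _ (Finset.mem_of_mem_erase h'))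
    · exact h6 v hv (Finset.mem_union_right _ h')

lemma rbp_reaches_inv6 {s t : RBPState V} {L : List (RBPMove V)}
    (h : RBPReaches G r s L t)
    (h6 : ∀ v, ¬G.IsSource v → v ∈ s.red ∪ s.blue → v ∈ s.computed) :
    ∀ v, ¬G.IsSource v → v ∈ t.red ∪ t.blue → v ∈ t.computed := by
  induction h with
  | nil s => exact h6
  | cons hstep _ ih => exact ih (rbp_step_inv6 G r hstep h6)

lemma rbp_step_blue_mono {s t : RBPState V} {m : RBPMove V}
    (h : RBPStep G r s m t) : s.blue ⊆ t.blue := by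
  cases m with
  | save v => obtain ⟨_, rfl⟩ := h; exact Finset.subset_insert _ _
  | load v => obtain ⟨_, _, rfl⟩ := h; exact fun _ h => h
  | compute v => obtain ⟨_, _, _, _, rfl⟩ := h; exact fun _ h => h
  | delete v => obtain ⟨_, rfl⟩ := h; exact fun _ h => h

/-- Claim A: a node with no pebbles that is already computed can never regain a pebble,
so none of its out-neighbors can become computed later. -/
lemma rbp_lemA {s t : RBPState V} {L : List (RBPMove V)} (h : RBPReaches G r s L t) :
    ∀ v, v ∉ s.red → v ∉ s.blue → v ∈ s.computed →
      ∀ w, G.E v w → w ∈ t.computed → w ∈ s.computed := by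
  induction h with
  | nil s => exact fun v _ _ _ w _ hw => hw
  | @cons s₁ t₁ u₁ m L₁ hstep hrest ih =>
    intro v hvr hvb hvc w hvw hwt
    cases m with
    | save x =>
      obtain ⟨hx, rfl⟩ := hstep
      refine ih v hvr ?_ hvc w hvw hwt
      simp only [Finset.mem_insert, not_or]
      exact ⟨fun h' => hvr (h' ▸ hx), hvb⟩
    | load x =>
      obtain ⟨hx, _, rfl⟩ := hstep
      refine ih v ?_ hvb hvc w hvw hwt
      simp only [Finset.mem_insert, not_or]
      exact ⟨fun h' => hvb (h' ▸ hx), hvr⟩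
    | compute x =>
      obtain ⟨hns, hnc, hpred, hcard, rfl⟩ := hstep
      have hvx : v ≠ x := fun h' => hnc (h' ▸ hvc)
      have hw' : w ∈ insert x s₁.computed := by
        refine ih v ?_ hvb (Finset.mem_insert_of_mem hvc) w hvw hwt
        simp only [Finset.mem_insert, not_or]
        exact ⟨hvx, hvr⟩
      rcases Finset.mem_insert.mp hw' with rfl | h'
      · exact absurd (hpred v hvw) hvr
      · exact h'
    | delete x =>
      obtain ⟨hx, rfl⟩ := hstep
      exact ih v (fun h' => hvr (Finset.mem_of_mem_erase h')) hvb hvc w hvw hwt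

/-- Claim B: if a node becomes computed during a run, each of its non-source
in-neighbors is computed by the end. -/
lemma rbp_lemB {s t : RBPState V} {L : List (RBPMove V)} (h : RBPReaches G r s L t) :
    ∀ x, (∀ v, ¬G.IsSource v → v ∈ s.red ∪ s.blue → v ∈ s.computed) →
      x ∈ t.computed → x ∉ s.computed →
      ∀ w, G.E w x → ¬G.IsSource w → w ∈ t.computed := by
  induction h with
  | nil s => exact fun x _ hx hxn => absurd hx hxn
  | @cons s₁ t₁ u₁ m L₁ hstep hrest ih =>
    intro x h6 hx hxn w hwx hws
    by_cases hx1 : x ∈ t₁.computed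
    · cases m with
      | save y => obtain ⟨_, rfl⟩ := hstep; exact absurd hx1 hxn
      | load y => obtain ⟨_, _, rfl⟩ := hstep; exact absurd hx1 hxn
      | compute y =>
        obtain ⟨hns, hnc, hpred, hcard, rfl⟩ := hstep
        rcases Finset.mem_insert.mp hx1 with rfl | h'
        · have hwc : w ∈ s₁.computed := h6 w hws (Finset.mem_union_left _ (hpred w hwx))
          exact rbp_computed_mono G r hrest (Finset.mem_insert_of_mem hwc)
        · exact absurd h' hxn
      | delete y => obtain ⟨_, rfl⟩ := hstep; exact absurd hx1 hxn
    · exact ih x (rbp_step_inv6 G r hstep h6) hx hx1 w hwx hws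

lemma rbp_init_inv6 :
    ∀ v, ¬G.IsSource v → v ∈ (RBPInit G).red ∪ (RBPInit G).blue → v ∈ (RBPInit G).computed := by
  intro v hv hmem
  rcases Finset.mem_union.mp hmem with h' | h'
  · simp [RBPInit] at h'
  · simp [RBPInit] at h'
    exact absurd h' hv

/-- In a valid complete run, every non-source node gets computed. -/
lemma rbp_all_computed {t : RBPState V} {L : List (RBPMove V)} (hacyc : G.Acyclic)
    (h : RBPReaches G r (RBPInit G) L t) (hsink : ∀ v, G.IsSink v → v ∈ t.blue) :
    ∀ w, ¬G.IsSource w → w ∈ t.computed := by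
  have h6t := rbp_reaches_inv6 G r h (rbp_init_inv6 G)
  have hwf : WellFounded (fun a b : V => G.E b a) := by
    haveI : IsTrans V (fun a b : V => Relation.TransGen G.E b a) :=
      ⟨fun a b c h1 h2 => h2.trans h1⟩
    haveI : IsIrrefl V (fun a b : V => Relation.TransGen G.E b a) :=
      ⟨fun a h' => hacyc a h'⟩
    exact Subrelation.wf (fun {a b} hab => Relation.TransGen.single hab)
      (Finite.wellFounded_of_trans_of_irrefl _)
  intro w
  refine hwf.induction (C := fun w => ¬G.IsSource w → w ∈ t.computed) w ?_
  intro x ihx hxs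
  by_cases hsk : G.IsSink x
  · exact h6t x hxs (Finset.mem_union_right _ (hsink x hsk))
  · unfold DirGraph.IsSink at hsk
    push_neg at hsk
    obtain ⟨y, hy⟩ := hsk
    have hyc : y ∈ t.computed := ihx y hy (fun hs => hs x hy)
    exact rbp_lemB G r h y (rbp_init_inv6 G) hyc (by simp [RBPInit]) x hy hxs

/-- The simulation relation between an RBP state and a PRBP state. -/
def SimRel (s : RBPState V) (s' : PRBPState V) : Prop :=
  s'.lred ∪ s'.dred = s.red ∧
  Disjoint s'.lred s'.dred ∧
  s'.blue = s.blue ∧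
  s'.marked = Finset.univ.filter (fun e : V × V => G.E e.1 e.2 ∧ e.2 ∈ s.computed) ∧
  (∀ v ∈ s'.dred, v ∉ s.blue) ∧
  s'.lred ⊆ s.blue ∧
  (∀ v, ¬G.IsSource v → v ∈ s.red ∪ s.blue → v ∈ s.computed) ∧
  (∀ v, G.IsSource v → v ∈ s.blue)

/-- Main simulation: every RBP run (whose overall run computes all non-sources)
is simulated by a PRBP run of no greater cost. -/
lemma sim_main {s t : RBPState V} {L : List (RBPMove V)} (h : RBPReaches G r s L t) :
    (∀ w, ¬G.IsSource w → w ∈ t.computed) → ∀ s' : PRBPState V, SimRel G s s' →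
      ∃ (L' : List (PRBPMove V)) (t' : PRBPState V),
        PRBPReaches G r s' L' t' ∧ SimRel G t t' ∧ PRBPCost L' ≤ RBPCost L := by
  induction h with
  | nil s => exact fun _ s' hrel => ⟨[], s', .nil s', hrel, le_rfl⟩
  | @cons s₁ t₁ u₁ m L₁ hstep hrest ih =>
    intro hfin s' hrel
    obtain ⟨R1, R2, R3, R4, R5, R6, R7, R8⟩ := hrel
    cases m with
    | save v =>
      obtain ⟨hv, rfl⟩ := hstep
      by_cases hvd : v ∈ s'.dred
      · -- simulate by a PRBP save
        have hPstep : PRBPStep G r s' (.save v)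
            ⟨insert v s'.lred, s'.dred.erase v, insert v s'.blue, s'.marked⟩ := by
          exact ⟨hvd, rfl⟩
        have hrel' : SimRel G { s₁ with blue := insert v s₁.blue }
            ⟨insert v s'.lred, s'.dred.erase v, insert v s'.blue, s'.marked⟩ := by
          refine ⟨?_, ?_, ?_, ?_, ?_, ?_, ?_, ?_⟩
          · -- insert v lred ∪ erase v dred = red
            rw [← R1]
            ext a
            simp only [Finset.mem_insert, Finset.mem_union, Finset.mem_erase]
            constructor
            · rintro ((rfl | ha) | ⟨_, ha⟩)
              · exact Or.inr hvd
              · exact Or.inl ha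
              · exact Or.inr ha
            · rintro (ha | ha)
              · exact Or.inl (Or.inr ha)
              · by_cases hav : a = v
                · exact Or.inl (Or.inl hav)
                · exact Or.inr ⟨hav, ha⟩
          · refine Finset.disjoint_left.mpr ?_
            intro a ha hb
            rcases Finset.mem_insert.mp ha with rfl | ha
            · exact (Finset.notMem_erase a _) hb
            · exact (Finset.disjoint_left.mp R2 ha) (Finset.mem_of_mem_erase hb)
          · rw [R3]
          · exact R4
          · intro u hu
            have hu' := Finset.mem_of_mem_erase hu
            have hne : u ≠ v := (Finset.mem_erase.mp hu).1
            simp only [Finset.mem_insert, not_or]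
            exact ⟨hne, R5 u hu'⟩
          · intro a ha
            rcases Finset.mem_insert.mp ha with rfl | ha
            · exact Finset.mem_insert_self _ _
            · exact Finset.mem_insert_of_mem (R6 ha)
          · intro u hu hmem
            refine R7 u hu ?_
            rcases Finset.mem_union.mp hmem with h' | h'
            · exact Finset.mem_union_left _ h'
            · rcases Finset.mem_insert.mp h' with rfl | h'
              · exact Finset.mem_union_left _ hv
              · exact Finset.mem_union_right _ h'
          · intro u hu
            exact Finset.mem_insert_of_mem (R8 u hu)
        obtain ⟨L', t', hre, hrel'', hcost⟩ := ih hfin _ hrel'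
        refine ⟨.save v :: L', t', .cons hPstep hre, hrel'', ?_⟩
        rw [PRBPCost_cons', RBPCost_cons']
        exact Nat.add_le_add_left hcost 1
      · -- v is already light red, hence already blue: the RBP save is a no-op
        have hvl : v ∈ s'.lred := by
          have : v ∈ s'.lred ∪ s'.dred := R1 ▸ hv
          rcases Finset.mem_union.mp this with h' | h'
          · exact h'
          · exact absurd h' hvd
        have hvb : v ∈ s₁.blue := R6 hvl
        have hins : insert v s₁.blue = s₁.blue := Finset.insert_eq_self.mpr hvb
        have hrel' : SimRel G { s₁ with blue := insert v s₁.blue } s' := by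
          refine ⟨R1, R2, ?_, R4, ?_, ?_, ?_, ?_⟩
          · rw [R3, hins]
          · intro u hu; rw [hins]; exact R5 u hu
          · rw [hins]; exact R6
          · intro u hu hmem
            refine R7 u hu ?_
            rcases Finset.mem_union.mp hmem with h' | h'
            · exact Finset.mem_union_left _ h'
            · exact Finset.mem_union_right _ (hins ▸ h')
          · intro u hu; rw [hins]; exact R8 u hu
        obtain ⟨L', t', hre, hrel'', hcost⟩ := ih hfin _ hrel'
        refine ⟨L', t', hre, hrel'', ?_⟩
        rw [RBPCost_cons']
        exact le_trans hcost (Nat.le_add_left _ _)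
    | load v =>
      obtain ⟨hv, hcard, rfl⟩ := hstep
      have hvd : v ∉ s'.dred := fun h' => R5 v h' hv
      have hset : insert v s'.lred ∪ s'.dred = insert v s₁.red := by
        rw [Finset.insert_union, R1]
      have hPstep : PRBPStep G r s' (.load v)
          ⟨insert v s'.lred, s'.dred, s'.blue, s'.marked⟩ := by
        exact ⟨R3 ▸ hv, by rw [hset]; exact hcard, rfl⟩
      have hrel' : SimRel G { s₁ with red := insert v s₁.red }
          ⟨insert v s'.lred, s'.dred, s'.blue, s'.marked⟩ := by
        refine ⟨hset, ?_, R3, R4, R5, ?_, ?_, R8⟩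
        · exact Finset.disjoint_left.mpr (fun a ha hb => by
            rcases Finset.mem_insert.mp ha with rfl | ha
            · exact hvd hb
            · exact (Finset.disjoint_left.mp R2 ha) hb)
        · intro a ha
          rcases Finset.mem_insert.mp ha with rfl | ha
          · exact hv
          · exact R6 ha
        · intro u hu hmem
          refine R7 u hu ?_
          rcases Finset.mem_union.mp hmem with h' | h'
          · rcases Finset.mem_insert.mp h' with rfl | h'
            · exact Finset.mem_union_right _ hv
            · exact Finset.mem_union_left _ h'
          · exact Finset.mem_union_right _ h'
      obtain ⟨L', t', hre, hrel'', hcost⟩ := ih hfin _ hrel'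
      refine ⟨.load v :: L', t', .cons hPstep hre, hrel'', ?_⟩
      rw [PRBPCost_cons', RBPCost_cons']
      exact Nat.add_le_add_left hcost 1
    | delete v =>
      obtain ⟨hv, rfl⟩ := hstep
      by_cases hvl : v ∈ s'.lred
      · -- delete a light red pebble
        have hvd : v ∉ s'.dred := Finset.disjoint_left.mp R2 hvl
        have hPstep : PRBPStep G r s' (.delete v)
            ⟨s'.lred.erase v, s'.dred, s'.blue, s'.marked⟩ := Or.inl ⟨hvl, rfl⟩
        have hrel' : SimRel G { s₁ with red := s₁.red.erase v }
            ⟨s'.lred.erase v, s'.dred, s'.blue, s'.marked⟩ := by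
          refine ⟨?_, ?_, R3, R4, R5, ?_, ?_, R8⟩
          · rw [← R1]
            ext a
            simp only [Finset.mem_union, Finset.mem_erase]
            constructor
            · rintro (⟨hav, ha⟩ | ha)
              · exact ⟨hav, Or.inl ha⟩
              · exact ⟨fun h' => hvd (h' ▸ ha), Or.inr ha⟩
            · rintro ⟨hav, ha | ha⟩
              · exact Or.inl ⟨hav, ha⟩
              · exact Or.inr ha
          · exact Disjoint.mono_left (Finset.erase_subset _ _) R2
          · exact subset_trans (Finset.erase_subset _ _) R6
          · intro u hu hmem
            refine R7 u hu ?_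
            rcases Finset.mem_union.mp hmem with h' | h'
            · exact Finset.mem_union_left _ (Finset.mem_of_mem_erase h')
            · exact Finset.mem_union_right _ h'
        obtain ⟨L', t', hre, hrel'', hcost⟩ := ih hfin _ hrel'
        refine ⟨.delete v :: L', t', .cons hPstep hre, hrel'', ?_⟩
        rw [PRBPCost_cons', RBPCost_cons']
        simpa [PRBPMove.ioCost, RBPMove.ioCost] using hcost
      · -- delete a dark red pebble: all out-edges already marked
        have hvd : v ∈ s'.dred := by
          have : v ∈ s'.lred ∪ s'.dred := R1 ▸ hv
          rcases Finset.mem_union.mp this with h' | h'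
          · exact absurd h' hvl
          · exact h'
        have hvb : v ∉ s₁.blue := R5 v hvd
        have hvns : ¬G.IsSource v := fun h' => hvb (R8 v h')
        have hvc : v ∈ s₁.computed := R7 v hvns (Finset.mem_union_left _ hv)
        have hall : ∀ w, G.E v w → (v, w) ∈ s'.marked := by
          intro w hw
          have hwns : ¬G.IsSource w := fun h' => h' v hw
          have hwc : w ∈ s₁.computed := by
            have := rbp_lemA G r hrest v (by simp) hvb hvc w hw (hfin w hwns)
            simpa using this
          rw [R4]
          simp only [Finset.mem_filter, Finset.mem_univ, true_and]
          exact ⟨hw, hwc⟩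
        have hPstep : PRBPStep G r s' (.delete v)
            ⟨s'.lred, s'.dred.erase v, s'.blue, s'.marked⟩ := Or.inr ⟨hvd, hall, rfl⟩
        have hrel' : SimRel G { s₁ with red := s₁.red.erase v }
            ⟨s'.lred, s'.dred.erase v, s'.blue, s'.marked⟩ := by
          refine ⟨?_, ?_, R3, R4, ?_, R6, ?_, R8⟩
          · rw [← R1]
            ext a
            simp only [Finset.mem_union, Finset.mem_erase]
            constructor
            · rintro (ha | ⟨hav, ha⟩)
              · exact ⟨fun h' => hvl (h' ▸ ha), Or.inl ha⟩
              · exact ⟨hav, Or.inr ha⟩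
            · rintro ⟨hav, ha | ha⟩
              · exact Or.inl ha
              · exact Or.inr ⟨hav, ha⟩
          · exact Disjoint.mono_right (Finset.erase_subset _ _) R2
          · exact fun u hu => R5 u (Finset.mem_of_mem_erase hu)
          · intro u hu hmem
            refine R7 u hu ?_
            rcases Finset.mem_union.mp hmem with h' | h'
            · exact Finset.mem_union_left _ (Finset.mem_of_mem_erase h')
            · exact Finset.mem_union_right _ h'
        obtain ⟨L', t', hre, hrel'', hcost⟩ := ih hfin _ hrel'
        refine ⟨.delete v :: L', t', .cons hPstep hre, hrel'', ?_⟩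
        rw [PRBPCost_cons', RBPCost_cons']
        simpa [PRBPMove.ioCost, RBPMove.ioCost] using hcost
    | compute v =>
      obtain ⟨hns, hnc, hpred, hcard, rfl⟩ := hstep
      have hvr : v ∉ s₁.red :=
        fun h' => hnc (R7 v hns (Finset.mem_union_left _ h'))
      have hvb : v ∉ s₁.blue :=
        fun h' => hnc (R7 v hns (Finset.mem_union_right _ h'))
      have hvA : v ∉ s'.lred := fun h' => hvr (R1 ▸ Finset.mem_union_left _ h')
      have hvB : v ∉ s'.dred := fun h' => hvr (R1 ▸ Finset.mem_union_right _ h')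
      have hvC : v ∉ s'.blue := R3 ▸ hvb
      set N : Finset V := Finset.univ.filter (fun u => G.E u v) with hN
      have hmemN : ∀ u, u ∈ N ↔ G.E u v := by
        intro u; simp [hN]
      have hNne : N.Nonempty := by
        unfold DirGraph.IsSource at hns
        push_neg at hns
        obtain ⟨u, hu⟩ := hns
        exact ⟨u, (hmemN u).mpr hu⟩
      -- the set currently in fast memory once v is made dark red
      have hcard' : (s'.lred ∪ insert v s'.dred).card ≤ r := by
        have : s'.lred ∪ insert v s'.dred = insert v s₁.red := by
          rw [Finset.union_insert, R1]
        rw [this]; exact hcard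
      have hmarked_of_red : ∀ u, u ∈ s₁.red → ∀ w, G.E w u → (w, u) ∈ s'.marked := by
        intro u hu w hw
        have huns : ¬G.IsSource u := fun h' => h' w hw
        have huc : u ∈ s₁.computed := R7 u huns (Finset.mem_union_left _ hu)
        rw [R4]
        simp only [Finset.mem_filter, Finset.mem_univ, true_and]
        exact ⟨hw, huc⟩
      have hnotmarked : ∀ u, (u, v) ∉ s'.marked := by
        intro u hmem
        rw [R4] at hmem
        simp only [Finset.mem_filter, Finset.mem_univ, true_and] at hmem
        exact hnc hmem.2
      -- key: chain the partial computes over a list of in-neighbours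
      have key : ∀ l : List V, l.Nodup → (∀ u ∈ l, G.E u v) → (∀ u ∈ l, u ∈ s₁.red) →
          ∀ M : Finset (V × V), (∀ u ∈ l, (u, v) ∉ M) →
          (∀ u ∈ l, ∀ w, G.E w u → (w, u) ∈ M) →
          PRBPReaches G r ⟨s'.lred, insert v s'.dred, s'.blue, M⟩
            (l.map fun u => PRBPMove.pcompute u v)
            ⟨s'.lred, insert v s'.dred, s'.blue,
              M ∪ l.toFinset.image fun u => (u, v)⟩ := by
        intro l
        induction l with
        | nil =>
          intro _ _ _ M _ _
          simpa using PRBPReaches.nil (V := V)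
            ⟨s'.lred, insert v s'.dred, s'.blue, M⟩
        | cons u lt ihl =>
          intro hnd hE hred M hnM hwM
          have hstep1 : PRBPStep G r ⟨s'.lred, insert v s'.dred, s'.blue, M⟩
              (.pcompute u v) ⟨s'.lred, insert v s'.dred, s'.blue, insert (u, v) M⟩ := by
            refine ⟨hE u List.mem_cons_self, hnM u List.mem_cons_self,
              hwM u List.mem_cons_self, ?_, Or.inl ?_, ?_, ?_⟩
            · -- u is red in the PRBP state
              show u ∈ s'.lred ∪ insert v s'.dred
              have : u ∈ s'.lred ∪ s'.dred := R1 ▸ hred u List.mem_cons_self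
              rcases Finset.mem_union.mp this with h' | h'
              · exact Finset.mem_union_left _ h'
              · exact Finset.mem_union_right _ (Finset.mem_insert_of_mem h')
            · show v ∈ s'.lred ∪ insert v s'.dred
              exact Finset.mem_union_right _ (Finset.mem_insert_self _ _)
            · show (s'.lred.erase v ∪ insert v (insert v s'.dred)).card ≤ r
              rw [Finset.erase_eq_of_notMem hvA, Finset.insert_idem]
              exact hcard'
            · show (⟨s'.lred, insert v s'.dred, s'.blue, insert (u, v) M⟩ : PRBPState V) = _
              simp [Finset.erase_eq_of_notMem hvA, Finset.erase_eq_of_notMem hvC,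
                Finset.insert_idem]
          have hrec := ihl (List.nodup_cons.mp hnd).2
            (fun x hx => hE x (List.mem_cons_of_mem _ hx))
            (fun x hx => hred x (List.mem_cons_of_mem _ hx))
            (insert (u, v) M)
            (by
              intro x hx hmem
              rcases Finset.mem_insert.mp hmem with h' | h'
              · have hxu : x = u := congrArg Prod.fst h'
                exact (List.nodup_cons.mp hnd).1 (hxu ▸ hx)
              · exact hnM x (List.mem_cons_of_mem _ hx) h')
            (fun x hx w hw => Finset.mem_insert_of_mem (hwM x (List.mem_cons_of_mem _ hx) w hw))
          refine PRBPReaches.cons hstep1 ?_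
          have hfinal : insert (u, v) M ∪ lt.toFinset.image (fun u => (u, v)) =
              M ∪ (u :: lt).toFinset.image (fun u => (u, v)) := by
            ext e
            simp only [Finset.mem_union, Finset.mem_insert, Finset.mem_image,
              List.toFinset_cons]
            constructor
            · rintro ((rfl | he) | ⟨x, hx, rfl⟩)
              · exact Or.inr ⟨u, Or.inl rfl, rfl⟩
              · exact Or.inl he
              · exact Or.inr ⟨x, Or.inr hx, rfl⟩
            · rintro (he | ⟨x, hx, rfl⟩)
              · exact Or.inl (Or.inr he)
              · rcases hx with rfl | hx
                · exact Or.inl (Or.inl rfl)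
                · exact Or.inr ⟨x, hx, rfl⟩
          rw [← hfinal]
          exact hrec
      obtain ⟨u₀, lt, hl⟩ : ∃ u₀ lt, N.toList = u₀ :: lt := by
        rcases hLl : N.toList with _ | ⟨u₀, lt⟩
        · exact absurd (Finset.toList_eq_nil.mp hLl)
            (Finset.nonempty_iff_ne_empty.mp hNne)
        · exact ⟨u₀, lt, rfl⟩
      have hndl : (u₀ :: lt).Nodup := hl ▸ N.nodup_toList
      have hmeml : ∀ u, u ∈ u₀ :: lt ↔ u ∈ N := by
        intro u; rw [← hl]; exact Finset.mem_toList
      have hNl : N = insert u₀ lt.toFinset := by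
        conv_lhs => rw [← Finset.toList_toFinset N, hl]
        simp
      have hEu₀ : G.E u₀ v := (hmemN u₀).mp ((hmeml u₀).mp List.mem_cons_self)
      -- first pcompute step, from s'
      have hstep0 : PRBPStep G r s' (.pcompute u₀ v)
          ⟨s'.lred, insert v s'.dred, s'.blue, insert (u₀, v) s'.marked⟩ := by
        refine ⟨hEu₀, hnotmarked u₀, hmarked_of_red u₀ (hpred u₀ hEu₀), ?_,
          Or.inr ⟨?_, ?_⟩, ?_, ?_⟩
        · show u₀ ∈ s'.lred ∪ s'.dred
          rw [R1]; exact hpred u₀ hEu₀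
        · show v ∉ s'.lred ∪ s'.dred
          rw [R1]; exact hvr
        · exact hvC
        · show (s'.lred.erase v ∪ insert v s'.dred).card ≤ r
          rw [Finset.erase_eq_of_notMem hvA]
          exact hcard'
        · show (⟨s'.lred, insert v s'.dred, s'.blue, insert (u₀, v) s'.marked⟩ :
              PRBPState V) = _
          simp [Finset.erase_eq_of_notMem hvA, Finset.erase_eq_of_notMem hvC]
      have hrest0 := key lt (List.nodup_cons.mp hndl).2
        (fun x hx => (hmemN x).mp ((hmeml x).mp (List.mem_cons_of_mem _ hx)))
        (fun x hx => hpred x ((hmemN x).mp ((hmeml x).mp (List.mem_cons_of_mem _ hx))))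
        (insert (u₀, v) s'.marked)
        (by
          intro x hx hmem
          rcases Finset.mem_insert.mp hmem with h' | h'
          · have hxu : x = u₀ := congrArg Prod.fst h'
            exact (List.nodup_cons.mp hndl).1 (hxu ▸ hx)
          · exact hnotmarked x h')
        (fun x hx w hw => Finset.mem_insert_of_mem
          (hmarked_of_red x (hpred x ((hmemN x).mp ((hmeml x).mp (List.mem_cons_of_mem _ hx)))) w hw))
      set t'' : PRBPState V := ⟨s'.lred, insert v s'.dred, s'.blue,
        insert (u₀, v) s'.marked ∪ lt.toFinset.image fun u => (u, v)⟩ with ht''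
      have hreach : PRBPReaches G r s'
          ((u₀ :: lt).map fun u => PRBPMove.pcompute u v) t'' :=
        PRBPReaches.cons hstep0 hrest0
      have hrel' : SimRel G
          (⟨insert v s₁.red, s₁.blue, insert v s₁.computed⟩ : RBPState V) t'' := by
        refine ⟨?_, ?_, R3, ?_, ?_, R6, ?_, R8⟩
        · show s'.lred ∪ insert v s'.dred = insert v s₁.red
          rw [Finset.union_insert, R1]
        · show Disjoint s'.lred (insert v s'.dred)
          exact Finset.disjoint_insert_right.mpr ⟨hvA, R2⟩
        · -- marked set equality
          show insert (u₀, v) s'.marked ∪ lt.toFinset.image (fun u => (u, v)) =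
            Finset.univ.filter (fun e : V × V => G.E e.1 e.2 ∧ e.2 ∈ insert v s₁.computed)
          ext ⟨a, b⟩
          simp only [Finset.mem_union, Finset.mem_insert, Finset.mem_image, R4,
            Finset.mem_filter, Finset.mem_univ, true_and, Prod.mk.injEq]
          constructor
          · rintro ((⟨rfl, rfl⟩ | ⟨he, hc⟩) | ⟨x, hx, rfl, rfl⟩)
            · exact ⟨hEu₀, Or.inl rfl⟩
            · exact ⟨he, Or.inr hc⟩
            · have : x ∈ N := hNl ▸ Finset.mem_insert_of_mem hx
              exact ⟨(hmemN x).mp this, Or.inl rfl⟩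
          · rintro ⟨he, hc⟩
            rcases hc with rfl | hc
            · have haN : a ∈ N := (hmemN a).mpr he
              rw [hNl] at haN
              rcases Finset.mem_insert.mp haN with rfl | ha
              · exact Or.inl (Or.inl ⟨rfl, rfl⟩)
              · exact Or.inr ⟨a, ha, rfl, rfl⟩
            · exact Or.inl (Or.inr ⟨he, hc⟩)
        · show ∀ u ∈ insert v s'.dred, u ∉ s₁.blue
          intro u hu
          rcases Finset.mem_insert.mp hu with rfl | hu
          · exact hvb
          · exact R5 u hu
        · intro u hu hmem
          rcases Finset.mem_union.mp hmem with h' | h'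
          · rcases Finset.mem_insert.mp h' with rfl | h'
            · exact Finset.mem_insert_self _ _
            · exact Finset.mem_insert_of_mem (R7 u hu (Finset.mem_union_left _ h'))
          · exact Finset.mem_insert_of_mem (R7 u hu (Finset.mem_union_right _ h'))
      obtain ⟨L', t', hre, hrel'', hcost⟩ := ih hfin _ hrel'
      refine ⟨((u₀ :: lt).map fun u => PRBPMove.pcompute u v) ++ L', t',
        PRBPReaches_append' G r hreach hre, hrel'', ?_⟩
      rw [PRBPCost_append', RBPCost_cons']
      have hzero : PRBPCost ((u₀ :: lt).map fun u => PRBPMove.pcompute u v) = 0 := by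
        unfold PRBPCost
        rw [List.map_map]
        refine List.sum_eq_zero ?_
        intro x hx
        simp only [List.mem_map] at hx
        obtain ⟨y, _, rfl⟩ := hx
        rfl
      rw [hzero, Nat.zero_add]
      exact le_trans hcost (Nat.le_add_left _ _)

end SimProof

/-- For any finite DAG `G` with no isolated nodes and any capacity
`r ≥ Δ_in + 1`, we have `OPT_PRBP(G,r) ≤ OPT_RBP(G,r)`; in particular every valid
RBP pebbling of cost `C` induces a valid PRBP pebbling of cost at most `C`. -/
theorem prbp_le_rbp {V : Type} [Fintype V] [DecidableEq V] (G : DirGraph V)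
    (hacyc : G.Acyclic) (hiso : G.NoIsolated) (r : ℕ) (hr : G.maxInDeg + 1 ≤ r) :
    optPRBP G r ≤ optRBP G r ∧
      ∀ L : List (RBPMove V), RBPValid G r L →
        ∃ L' : List (PRBPMove V), PRBPValid G r L' ∧ PRBPCost L' ≤ RBPCost L := by
  have main : ∀ L : List (RBPMove V), RBPValid G r L →
      ∃ L' : List (PRBPMove V), PRBPValid G r L' ∧ PRBPCost L' ≤ RBPCost L := by
    rintro L ⟨t, hre, hsink⟩
    have hfin : ∀ w, ¬G.IsSource w → w ∈ t.computed :=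
      rbp_all_computed G r hacyc hre hsink
    have hinit : SimRel G (RBPInit G) (PRBPInit G) := by
      refine ⟨?_, ?_, rfl, ?_, ?_, ?_, ?_, ?_⟩
      · simp [RBPInit, PRBPInit]
      · simp [PRBPInit]
      · ext ⟨a, b⟩
        simp [RBPInit, PRBPInit]
      · intro u hu; simp [PRBPInit] at hu
      · intro u hu; simp [PRBPInit] at hu
      · exact rbp_init_inv6 G
      · intro u hu; simp [RBPInit]; exact hu
    obtain ⟨L', t', hre', hrel, hcost⟩ := sim_main G r hre hfin (PRBPInit G) hinit
    obtain ⟨h1, h2, h3, h4, h5, h6, h7, h8⟩ := hrel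
    refine ⟨L', ⟨t', hre', ?_, ?_⟩, hcost⟩
    · intro v hv; rw [h3]; exact hsink v hv
    · intro u v huv
      rw [h4]
      simp only [Finset.mem_filter, Finset.mem_univ, true_and]
      exact ⟨huv, hfin v (fun hs => hs u huv)⟩
  refine ⟨?_, main⟩
  refine le_sInf ?_
  rintro x ⟨L, hL, rfl⟩
  obtain ⟨L', hL', hc⟩ := main L hL
  refine le_trans (sInf_le ⟨L', hL', rfl⟩) ?_
  have : (PRBPCost L' : ℕ∞) ≤ (RBPCost L : ℕ∞) := Nat.cast_le.mpr hc
  simpa using this
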